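/- Let k be a field, C a finite-dimensional k-vector space, and d : C → C a linear map with d ∘ d = 0. Let L, R, P be subspaces of C such that d(L) ≤ L, d(R) ≤ R, d(P) ≤ P, P ≤ R, and L ⊔ R = ⊤. Assume: (i) (P ⊓ ker d) ⊓ d(R) ≤ d(P) (i.e. the inclusion-induced map H(P) → H(R) on homology is injective), and (ii) P ⊓ ker d ≤ range d (i.e. the inclusion-induced map H(P) → H(C) on homology vanishes). Then, writing I := L ⊓ R, one has dim_k(I ⊓ ker d) + dim_k(d(P)) ≥ dim_k(P ⊓ ker d) + dim_k(d(I)); equivalently dim H(I) ≥ dim H(P), where for a d-invariant subspace V the homology is H(V) := (V ⊓ ker d)/d(V). -/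
import Mathlib


/-- The endgame of the proof of Theorem 1.1: if the inclusion-induced map
`H(P) → H(R)` is injective while `H(P) → H(C)` vanishes, then (via Mayer--Vietoris)
`dim H(I) ≥ dim H(P)` for `I := L ⊓ R`, stated as the equivalent inequality of
finite dimensions. -/
theorem stmt7 {k : Type*} [Field k] {C : Type*} [AddCommGroup C] [Module k C]
    [FiniteDimensional k C]
    (d : C →ₗ[k] C) (hd : d ∘ₗ d = 0)
    (L R P : Submodule k C)
    (hL : Submodule.map d L ≤ L) (hR : Submodule.map d R ≤ R)
    (hP : Submodule.map d P ≤ P) (hPR : P ≤ R) (hLR : L ⊔ R = ⊤)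
    (hinj : (P ⊓ LinearMap.ker d) ⊓ Submodule.map d R ≤ Submodule.map d P)
    (hvan : P ⊓ LinearMap.ker d ≤ LinearMap.range d) :
    Module.finrank k ↥(P ⊓ LinearMap.ker d) +
        Module.finrank k ↥(Submodule.map d (L ⊓ R)) ≤
      Module.finrank k ↥((L ⊓ R) ⊓ LinearMap.ker d) +
        Module.finrank k ↥(Submodule.map d P) := by
  have hdd : ∀ x : C, d (d x) = 0 := fun x => by
    simpa using LinearMap.congr_fun hd x
  have hker : ∀ V : Submodule k C, Submodule.map d V ≤ LinearMap.ker d := by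
    rintro V x ⟨y, -, rfl⟩
    exact LinearMap.mem_ker.mpr (hdd y)
  -- Fact 1: B(P) = Z(P) ⊓ B(R)
  have fact1 : Submodule.map d P = (P ⊓ LinearMap.ker d) ⊓ Submodule.map d R := by
    apply le_antisymm
    · exact le_inf (le_inf hP (hker P)) (Submodule.map_mono hPR)
    · exact hinj
  -- Fact 2: Z(P) ≤ Z(I) ⊔ B(R)
  have fact2 : P ⊓ LinearMap.ker d ≤
      ((L ⊓ R) ⊓ LinearMap.ker d) ⊔ Submodule.map d R := by
    rintro z ⟨hzP, hzk⟩
    obtain ⟨c, rfl⟩ := hvan ⟨hzP, hzk⟩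
    have hc : c ∈ L ⊔ R := hLR ▸ Submodule.mem_top
    obtain ⟨l, hl, r, hr, rfl⟩ := Submodule.mem_sup.mp hc
    rw [map_add]
    refine Submodule.add_mem_sup ?_ (Submodule.mem_map_of_mem hr)
    have hdlL : d l ∈ L := hL (Submodule.mem_map_of_mem hl)
    have hdlR : d l ∈ R := by
      have : d l = d (l + r) - d r := by rw [map_add]; abel
      rw [this]
      exact R.sub_mem (hPR hzP) (hR (Submodule.mem_map_of_mem hr))
    exact ⟨⟨hdlL, hdlR⟩, LinearMap.mem_ker.mpr (hdd l)⟩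
  -- Fact 3: B(I) ≤ Z(I) ⊓ B(R)
  have fact3 : Submodule.map d (L ⊓ R) ≤
      ((L ⊓ R) ⊓ LinearMap.ker d) ⊓ Submodule.map d R := by
    refine le_inf (le_inf (le_inf ?_ ?_) (hker _)) (Submodule.map_mono inf_le_right)
    · exact le_trans (Submodule.map_mono inf_le_left) hL
    · exact le_trans (Submodule.map_mono inf_le_right) hR
  -- Dimension counting
  have e1 := Submodule.finrank_sup_add_finrank_inf_eq (P ⊓ LinearMap.ker d)
    (Submodule.map d R)
  have e2 := Submodule.finrank_sup_add_finrank_inf_eq ((L ⊓ R) ⊓ LinearMap.ker d)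
    (Submodule.map d R)
  rw [← fact1] at e1
  have m1 : Module.finrank k ↥((P ⊓ LinearMap.ker d) ⊔ Submodule.map d R) ≤
      Module.finrank k ↥(((L ⊓ R) ⊓ LinearMap.ker d) ⊔ Submodule.map d R) :=
    Submodule.finrank_mono (sup_le fact2 le_sup_right)
  have m2 : Module.finrank k ↥(Submodule.map d (L ⊓ R)) ≤
      Module.finrank k ↥(((L ⊓ R) ⊓ LinearMap.ker d) ⊓ Submodule.map d R) :=
    Submodule.finrank_mono fact3
  omega
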